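/- Let F be a field of characteristic zero, N ≥ 1, and let k, n be natural numbers with 1 ≤ k < n. Then for a homogeneous polynomial f of degree n in F[X_0, …, X_N], one has ∂_0^{n−k} f = 0 if and only if f belongs to the ideal power 𝔪^{k+1}, where 𝔪 = (X_1, …, X_N). Equivalently, the kernel of the linear map ∂_0^{n−k} : S^n → S^k equals S^n ∩ 𝔪^{k+1}. -/

import Mathlib

open MvPolynomial

/-- The ideal `𝔪 = (X 1, …, X N)` generated by the variables `X i` with `i ≠ 0`. -/
noncomputable def mIdeal (F : Type*) [CommSemiring F] (N : ℕ) :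
    Ideal (MvPolynomial (Fin (N + 1)) F) :=
  Ideal.span {p | ∃ i : Fin (N + 1), i ≠ 0 ∧ p = X i}

/-- The `m`-fold iterate of the partial derivative with respect to `X 0`,
as an `F`-linear endomorphism. -/
noncomputable def pd0pow (F : Type*) [CommSemiring F] (N : ℕ) (m : ℕ) :
    MvPolynomial (Fin (N + 1)) F →ₗ[F] MvPolynomial (Fin (N + 1)) F :=
  (pderiv (0 : Fin (N + 1))).toLinearMap ^ m

lemma coeff_pderiv_aux {σ : Type*} [DecidableEq σ] {R : Type*} [CommSemiring R]
    (i : σ) (f : MvPolynomial σ R) (e : σ →₀ ℕ) :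
    coeff e (pderiv i f) = ((e i + 1 : ℕ) : R) * coeff (e + Finsupp.single i 1) f := by
  induction f using MvPolynomial.induction_on' with
  | monomial s a =>
    rw [pderiv_monomial, coeff_monomial, coeff_monomial]
    by_cases h : s = e + Finsupp.single i 1
    · subst h
      rw [if_pos (add_tsub_cancel_right _ _), if_pos rfl]
      simp [mul_comm]
    · rw [if_neg h]
      by_cases h0 : s i = 0
      · simp [h0]
      · rw [if_neg, mul_zero]
        intro hc
        apply h
        rw [← hc, tsub_add_cancel_of_le]
        exact Finsupp.single_le_iff.mpr (Nat.one_le_iff_ne_zero.mpr h0)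
  | add p q hp hq => simp [hp, hq, mul_add]

lemma coeff_pd0pow {F : Type*} [CommSemiring F] {N : ℕ} (r : ℕ)
    (f : MvPolynomial (Fin (N + 1)) F) (e : Fin (N + 1) →₀ ℕ) :
    coeff e (pd0pow F N r f) =
      ((∏ j ∈ Finset.range r, (e 0 + j + 1) : ℕ) : F) *
        coeff (e + Finsupp.single 0 r) f := by
  induction r generalizing f with
  | zero => simp [pd0pow]
  | succ r ih =>
    have hstep : pd0pow F N (r + 1) f = pd0pow F N r (pderiv 0 f) := by
      simp [pd0pow, pow_succ, Module.End.mul_apply]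
    rw [hstep, ih, coeff_pderiv_aux, Finset.prod_range_succ]
    have h1 : ((e + Finsupp.single 0 r : Fin (N + 1) →₀ ℕ)) 0 = e 0 + r := by
      simp
    have h2 : e + Finsupp.single 0 r + Finsupp.single 0 1
        = e + Finsupp.single (0 : Fin (N + 1)) (r + 1) := by
      rw [add_assoc, ← Finsupp.single_add]
    rw [h1, h2]
    push_cast
    ring

lemma pd0pow_eq_zero_iff {F : Type*} [Field F] [CharZero F] {N : ℕ} (r : ℕ)
    (f : MvPolynomial (Fin (N + 1)) F) :
    pd0pow F N r f = 0 ↔ ∀ d ∈ f.support, d 0 < r := by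
  constructor
  · intro h d hd
    by_contra hlt
    push_neg at hlt
    have hle : Finsupp.single (0 : Fin (N + 1)) r ≤ d := Finsupp.single_le_iff.mpr hlt
    have he : d - Finsupp.single 0 r + Finsupp.single 0 r = d := tsub_add_cancel_of_le hle
    have h0 : coeff (d - Finsupp.single 0 r) (pd0pow F N r f) = 0 := by rw [h, coeff_zero]
    rw [coeff_pd0pow, he] at h0
    have hprod : ((∏ j ∈ Finset.range r,
        (((d - Finsupp.single 0 r : Fin (N + 1) →₀ ℕ)) 0 + j + 1) : ℕ) : F) ≠ 0 := by
      rw [Nat.cast_ne_zero]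
      exact (Finset.prod_pos fun j _ => by omega).ne'
    rcases mul_eq_zero.mp h0 with h' | h'
    · exact hprod h'
    · exact (MvPolynomial.mem_support_iff.mp hd) h'
  · intro h
    apply MvPolynomial.ext
    intro m
    rw [coeff_pd0pow, coeff_zero]
    have : coeff (m + Finsupp.single 0 r) f = 0 := by
      by_contra hc
      have h1 := h _ (MvPolynomial.mem_support_iff.mpr hc)
      have h2 : ((m + Finsupp.single 0 r : Fin (N + 1) →₀ ℕ)) 0 = m 0 + r := by simp
      omega
    rw [this, mul_zero]

lemma prod_pow_mem_pow {R : Type*} [CommRing R] (I : Ideal R) {ι : Type*}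
    (s : Finset ι) (g : ι → R) (e : ι → ℕ) (h : ∀ i ∈ s, g i ∈ I) :
    (∏ i ∈ s, g i ^ e i) ∈ I ^ (∑ i ∈ s, e i) := by
  classical
  induction s using Finset.induction with
  | empty => simp [Ideal.one_eq_top]
  | insert a s hni ih =>
    rw [Finset.prod_insert hni, Finset.sum_insert hni, pow_add]
    exact Ideal.mul_mem_mul (Ideal.pow_mem_pow (h a (Finset.mem_insert_self a s)) _)
      (ih fun i hi => h i (Finset.mem_insert_of_mem hi))

lemma X_mem_mIdeal {F : Type*} [CommRing F] {N : ℕ} {i : Fin (N + 1)} (hi : i ≠ 0) :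
    (X i : MvPolynomial (Fin (N + 1)) F) ∈ mIdeal F N :=
  Ideal.subset_span ⟨i, hi, rfl⟩

/-- The weight of an exponent vector: total degree in the variables other than `X 0`. -/
def wgt {N : ℕ} (d : Fin (N + 1) →₀ ℕ) : ℕ := ∑ i ∈ Finset.univ.erase 0, d i

lemma wgt_add {N : ℕ} (d e : Fin (N + 1) →₀ ℕ) : wgt (d + e) = wgt d + wgt e := by
  simp [wgt, Finset.sum_add_distrib]

lemma mem_mIdeal_pow_of_wgt {F : Type*} [Field F] {N : ℕ} (t : ℕ)
    (f : MvPolynomial (Fin (N + 1)) F) (h : ∀ d ∈ f.support, t ≤ wgt d) :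
    f ∈ mIdeal F N ^ t := by
  rw [f.as_sum]
  apply Ideal.sum_mem
  intro d hd
  have hmon : (monomial d (coeff d f) : MvPolynomial (Fin (N + 1)) F)
      = (C (coeff d f) * X 0 ^ d 0) * ∏ i ∈ Finset.univ.erase 0, X i ^ d i := by
    rw [monomial_eq, Finsupp.prod_fintype _ _ (fun i => pow_zero _)]
    rw [← Finset.mul_prod_erase Finset.univ _ (Finset.mem_univ 0), mul_assoc]
  rw [hmon]
  apply Ideal.mul_mem_left
  have hp : (∏ i ∈ Finset.univ.erase 0, X i ^ d i : MvPolynomial (Fin (N + 1)) F)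
      ∈ mIdeal F N ^ wgt d :=
    prod_pow_mem_pow _ _ _ _ fun i hi => X_mem_mIdeal (Finset.mem_erase.mp hi).1
  exact Ideal.pow_le_pow_right (h d hd) hp

lemma mIdeal_eq_span_image {F : Type*} [Field F] {N : ℕ} :
    mIdeal F N = Ideal.span (X '' {i : Fin (N + 1) | i ≠ 0}) := by
  unfold mIdeal
  congr 1
  ext p
  constructor
  · rintro ⟨i, hi, rfl⟩; exact ⟨i, hi, rfl⟩
  · rintro ⟨i, hi, rfl⟩; exact ⟨i, hi, rfl⟩

lemma wgt_le_of_mem_mIdeal_pow {F : Type*} [Field F] {N : ℕ} (t : ℕ)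
    (f : MvPolynomial (Fin (N + 1)) F) (h : f ∈ mIdeal F N ^ t) :
    ∀ d ∈ f.support, t ≤ wgt d := by
  classical
  induction t generalizing f with
  | zero => intro d _; exact Nat.zero_le _
  | succ t ih =>
    rw [pow_succ] at h
    refine Submodule.mul_induction_on h ?_ ?_
    · intro m hm n hn d hd
      have hsub := MvPolynomial.support_mul m n hd
      rw [Finset.mem_add] at hsub
      obtain ⟨da, hda, db, hdb, rfl⟩ := hsub
      have h1 : t ≤ wgt da := ih m hm da hda
      have h2 : 1 ≤ wgt db := by
        rw [mIdeal_eq_span_image, mem_ideal_span_X_image] at hn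
        obtain ⟨i, hi, hne⟩ := hn db hdb
        calc 1 ≤ db i := Nat.one_le_iff_ne_zero.mpr hne
        _ ≤ wgt db := Finset.single_le_sum (fun j _ => Nat.zero_le _)
            (Finset.mem_erase.mpr ⟨hi, Finset.mem_univ i⟩)
      rw [wgt_add]
      omega
    · intro x y hx hy d hd
      rcases Finset.mem_union.mp (MvPolynomial.support_add hd) with h' | h'
      · exact hx d h'
      · exact hy d h'

theorem stmt_5 {F : Type*} [Field F] [CharZero F] {N : ℕ} (hN : 1 ≤ N)
    (k n : ℕ) (hk : 1 ≤ k) (hkn : k < n) :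
    ∀ f ∈ homogeneousSubmodule (Fin (N + 1)) F n,
      pd0pow F N (n - k) f = 0 ↔ f ∈ (mIdeal F N) ^ (k + 1) := by
  intro f hf
  rw [mem_homogeneousSubmodule] at hf
  have hdeg : ∀ d ∈ f.support, d 0 + wgt d = n := by
    intro d hd
    have := hf (MvPolynomial.mem_support_iff.mp hd)
    rw [Finsupp.weight_apply] at this
    rw [Finsupp.sum_fintype _ _ (fun i => by simp)] at this
    simp only [Pi.one_apply, smul_eq_mul, mul_one] at this
    rw [← this, ← Finset.add_sum_erase Finset.univ _ (Finset.mem_univ 0)]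
    rfl
  rw [pd0pow_eq_zero_iff]
  constructor
  · intro h
    apply mem_mIdeal_pow_of_wgt
    intro d hd
    have := h d hd
    have := hdeg d hd
    omega
  · intro h d hd
    have := wgt_le_of_mem_mIdeal_pow _ f h d hd
    have := hdeg d hd
    omega
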